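/- With the noise schedule β₁ = T^{-c₀}, β_t = (c₁ log T / T) · min{β₁(1 + c₁ log T/T)^t, 1} for t ≥ 2, α_t = 1 - β_t, and ᾱ_t = ∏_{i=1}^t α_i, for T large enough one has, for all 2 ≤ t ≤ T: (1/2)(1-α_t)/(1-ᾱ_t) ≤ (1/2)(1-α_t)/(α_t - ᾱ_t) ≤ (1-α_t)/(1-ᾱ_{t-1}) ≤ 4c₁ log T / T. -/

import Mathlib

open Finset

private lemma aux_prod_one_sub (s : Finset ℕ) (f : ℕ → ℝ) (h : ∀ i ∈ s, 0 ≤ f i ∧ f i ≤ 1) :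
    (1 + ∑ i ∈ s, f i) * ∏ i ∈ s, (1 - f i) ≤ 1 := by
  induction s using Finset.cons_induction with
  | empty => simp
  | cons a s ha ih =>
    simp only [Finset.sum_cons, Finset.prod_cons]
    have hA := h a (Finset.mem_cons_self a s)
    have ih' := ih (fun i hi => h i (Finset.mem_cons_of_mem hi))
    have hS : 0 ≤ ∑ i ∈ s, f i := Finset.sum_nonneg fun i hi => (h i (Finset.mem_cons_of_mem hi)).1
    have hP : 0 ≤ ∏ i ∈ s, (1 - f i) :=
      Finset.prod_nonneg fun i hi => by linarith [(h i (Finset.mem_cons_of_mem hi)).2]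
    nlinarith [mul_le_mul_of_nonneg_right
      (show (1 + (f a + ∑ i ∈ s, f i)) * (1 - f a) ≤ 1 + ∑ i ∈ s, f i by nlinarith) hP]

open Filter in
set_option maxHeartbeats 1000000 in
/-- With the two-phase noise schedule `β₁ = T^{-c₀}`,
`β_t = (c₁ log T / T) · min{β₁ (1 + c₁ log T / T)^t, 1}` for `t ≥ 2`, `α_t = 1 - β_t`, and
`ᾱ_t = ∏_{i=1}^t α_i`, for `T` large enough one has, for all `2 ≤ t ≤ T`:
`(1/2)(1-α_t)/(1-ᾱ_t) ≤ (1/2)(1-α_t)/(α_t-ᾱ_t) ≤ (1-α_t)/(1-ᾱ_{t-1}) ≤ 4c₁ log T / T`. -/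
theorem statement1 (c₀ c₁ : ℝ) (hc₀ : 0 < c₀) (hc₁ : 0 < c₁) :
    ∃ T₀ : ℕ, ∀ T : ℕ, T₀ ≤ T →
      ∀ β : ℕ → ℝ,
        β 1 = (T : ℝ) ^ (-c₀) →
        (∀ t, 2 ≤ t →
          β t = c₁ * Real.log T / T *
            min ((T : ℝ) ^ (-c₀) * (1 + c₁ * Real.log T / T) ^ t) 1) →
        ∀ α : ℕ → ℝ, (∀ t, α t = 1 - β t) →
        ∀ αbar : ℕ → ℝ, (∀ t, αbar t = ∏ i ∈ Finset.Icc 1 t, α i) →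
        ∀ t, 2 ≤ t → t ≤ T →
          (1 / 2) * (1 - α t) / (1 - αbar t) ≤ (1 / 2) * (1 - α t) / (α t - αbar t) ∧
          (1 / 2) * (1 - α t) / (α t - αbar t) ≤ (1 - α t) / (1 - αbar (t - 1)) ∧
          (1 - α t) / (1 - αbar (t - 1)) ≤ 4 * c₁ * Real.log T / T := by
  classical
  have hev : ∀ᶠ T : ℕ in atTop,
      2 ≤ T ∧ c₁ * Real.log T / T ≤ 1/10 ∧ (T:ℝ) ^ (-c₀) ≤ 1/8 := by
    have h1 : Tendsto (fun T : ℕ => c₁ * Real.log T / T) atTop (nhds 0) := by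
      have := (Real.isLittleO_log_id_atTop.const_mul_left c₁).tendsto_div_nhds_zero
      have := this.comp tendsto_natCast_atTop_atTop
      simpa [Function.comp_def, mul_div_assoc] using this
    have h2 : Tendsto (fun T : ℕ => (T:ℝ) ^ (-c₀)) atTop (nhds 0) :=
      (tendsto_rpow_neg_atTop hc₀).comp tendsto_natCast_atTop_atTop
    filter_upwards [eventually_ge_atTop 2, h1.eventually_le_const (by norm_num : (0:ℝ) < 1/10),
      h2.eventually_le_const (by norm_num : (0:ℝ) < 1/8)] with T hT h1 h2
    exact ⟨hT, h1, h2⟩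
  obtain ⟨T₀, hT₀⟩ := eventually_atTop.mp hev
  refine ⟨T₀, ?_⟩
  intro T hT β hβ1 hβ α hα αbar hαbar t ht2 htT
  obtain ⟨hT2, hL10, hb8⟩ := hT₀ T hT
  set L : ℝ := c₁ * Real.log T / T with hLdef
  set b : ℝ := (T : ℝ) ^ (-c₀) with hbdef
  have hTpos : (0:ℝ) < T := by exact_mod_cast Nat.lt_of_lt_of_le (by norm_num) hT2
  have hlogpos : 0 < Real.log T := Real.log_pos (by exact_mod_cast hT2)
  have hL : 0 < L := by rw [hLdef]; positivity
  have hb : 0 < b := hbdef ▸ Real.rpow_pos_of_pos hTpos _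
  clear_value L b
  have hx1 : (1:ℝ) ≤ 1 + L := by linarith
  have hxpow : ∀ i : ℕ, (1:ℝ) ≤ (1 + L) ^ i := fun i => one_le_pow₀ hx1
  -- bounds on β
  have hβbd : ∀ i, 1 ≤ i → 0 < β i ∧ β i ≤ 1/2 := by
    intro i hi
    rcases eq_or_lt_of_le hi with h1 | h2
    · rw [← h1, hβ1]
      exact ⟨hb, by linarith⟩
    · rw [hβ i h2]
      constructor
      · exact mul_pos hL (lt_min (by positivity) one_pos)
      · calc L * min (b * (1 + L) ^ i) 1 ≤ L * 1 :=
              mul_le_mul_of_nonneg_left (min_le_right _ _) hL.le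
          _ ≤ 1/2 := by linarith
  -- the sum S
  set S : ℝ := ∑ i ∈ Finset.Icc 1 (t-1), β i with hSdef
  clear_value S
  have ht1 : 1 ≤ t - 1 := by omega
  have hmem : ∀ i ∈ Finset.Icc 1 (t-1), 0 ≤ β i ∧ β i ≤ 1 := by
    intro i hi
    have := hβbd i (Finset.mem_Icc.mp hi).1
    exact ⟨this.1.le, by linarith [this.2]⟩
  have hSpos : 0 < S := by
    have h1mem : (1:ℕ) ∈ Finset.Icc 1 (t-1) := Finset.mem_Icc.mpr ⟨le_refl 1, ht1⟩
    have h2 := Finset.single_le_sum (f := β) (fun i hi => (hmem i hi).1) h1mem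
    rw [← hSdef] at h2
    have hβ1pos := (hβbd 1 le_rfl).1
    linarith
  have h1S : 0 < 1 + S := by linarith
  have hkey : (1 + S) * αbar (t-1) ≤ 1 := by
    rw [hSdef, hαbar]
    have : ∏ i ∈ Finset.Icc 1 (t-1), α i = ∏ i ∈ Finset.Icc 1 (t-1), (1 - β i) :=
      Finset.prod_congr rfl fun i _ => hα i
    rw [this]
    exact aux_prod_one_sub _ _ hmem
  have hS1 : S / (1 + S) ≤ 1 - αbar (t-1) := by
    rw [div_le_iff₀ h1S]; nlinarith
  have hα' : 0 < 1 - αbar (t-1) := lt_of_lt_of_le (by positivity) hS1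
  have ht' : t - 1 + 1 = t := by omega
  -- geometric sum helper
  have hgeom : ∀ m : ℕ, 2 ≤ m → (∀ i, 2 ≤ i → i ≤ m - 1 → b * (1+L)^i ≤ 1) →
      ∑ i ∈ Finset.Icc 2 (m-1), β i = b * ((1+L)^m - (1+L)^2) := by
    intro m hm hbd
    have hm' : m - 1 + 1 = m := by omega
    have hIcc : Finset.Icc 2 (m-1) = Finset.Ico 2 m := by
      ext x; simp only [Finset.mem_Icc, Finset.mem_Ico]; omega
    have hcongr : ∑ i ∈ Finset.Icc 2 (m-1), β i
        = ∑ i ∈ Finset.Icc 2 (m-1), L * b * (1+L)^i := by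
      refine Finset.sum_congr rfl fun i hi => ?_
      obtain ⟨hi2, hi1⟩ := Finset.mem_Icc.mp hi
      rw [hβ i hi2, min_eq_left (hbd i hi2 hi1)]; ring
    rw [hcongr, ← Finset.mul_sum, hIcc, geom_sum_Ico (by nlinarith : (1+L) ≠ 1) hm]
    have : (1 + L - 1) = L := by ring
    rw [this]
    field_simp
  -- the core bound: min (...) 1 ≤ 4 * (S/(1+S))
  have hMS : min (b * (1+L)^t) 1 ≤ 4 * (S / (1+S)) := by
    rcases le_or_gt (b * (1+L)^t) 1 with hA | hB
    · -- geometric case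
      rw [min_eq_left hA]
      have hsplit : Finset.Icc 1 (t-1) = insert 1 (Finset.Icc 2 (t-1)) := by
        ext x; simp only [Finset.mem_Icc, Finset.mem_insert]; omega
      have hSval : S = b + b * ((1+L)^t - (1+L)^2) := by
        rw [hSdef, hsplit, Finset.sum_insert (by simp), hβ1,
          hgeom t ht2 (fun i h2 h1 => by
            calc b * (1+L)^i ≤ b * (1+L)^t :=
                  mul_le_mul_of_nonneg_left (pow_le_pow_right₀ hx1 (by omega)) hb.le
              _ ≤ 1 := hA)]
      have hP1 : (1:ℝ) ≤ (1+L)^t := hxpow t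
      have hQ : ((1:ℝ)+L)^2 = 1 + 2*L + L^2 := by ring
      have hbP : b * 1 ≤ b * (1+L)^t := mul_le_mul_of_nonneg_left hP1 hb.le
      have hbL : b * L ≤ b * (1/10) := mul_le_mul_of_nonneg_left hL10 hb.le
      have hbL2 : b * L^2 ≤ b * (1/100) :=
        mul_le_mul_of_nonneg_left (by nlinarith) hb.le
      have hSle1 : S ≤ 1 := by nlinarith [mul_pos hb hL, mul_nonneg hb.le (sq_nonneg L)]
      have h2S : b * (1+L)^t ≤ 2 * S := by linarith [hbP, hbL, hbL2, hSval]
      rw [show (4:ℝ) * (S / (1+S)) = 4 * S / (1+S) by ring, le_div_iff₀ h1S]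
      linarith [mul_le_mul_of_nonneg_right h2S h1S.le,
        mul_le_mul_of_nonneg_left hSle1 hSpos.le]
    · -- saturated case
      rw [min_eq_right hB.le]
      have hex : ∃ s : ℕ, 1 < b * (1+L)^s := ⟨t, hB⟩
      set s := Nat.find hex with hsdef
      have hs : 1 < b * (1+L)^s := Nat.find_spec hex
      have hst : s ≤ t := Nat.find_min' hex hB
      have hsmin : ∀ m : ℕ, m < s → ¬ (1 < b * (1+L)^m) := fun m hm => Nat.find_min hex hm
      clear_value s
      have hb2 : b * (1+L)^2 ≤ 1/2 := by nlinarith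
      have hs3 : 3 ≤ s := by
        by_contra hcon
        push_neg at hcon
        have : b * (1+L)^s ≤ b * (1+L)^2 :=
          mul_le_mul_of_nonneg_left (pow_le_pow_right₀ hx1 (by omega)) hb.le
        linarith
      have hs1 : b * (1+L)^(s-1) ≤ 1 := not_lt.mp (hsmin (s-1) (by omega))
      have hsum : ∑ i ∈ Finset.Icc 2 (s-1), β i = b * ((1+L)^s - (1+L)^2) := by
        refine hgeom s (by omega) (fun i h2 h1 => ?_)
        calc b * (1+L)^i ≤ b * (1+L)^(s-1) :=
              mul_le_mul_of_nonneg_left (pow_le_pow_right₀ hx1 h1) hb.le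
          _ ≤ 1 := hs1
      have hsub : ∑ i ∈ Finset.Icc 2 (s-1), β i ≤ S := by
        rw [hSdef]
        refine Finset.sum_le_sum_of_subset_of_nonneg ?_ (fun i hi _ => (hmem i hi).1)
        intro x hx
        simp only [Finset.mem_Icc] at *
        omega
      have hS3 : 1/3 ≤ S := by
        have hb2' : b * (1+L)^2 ≤ 1/2 := hb2
        rw [hsum] at hsub
        linarith
      rw [show (4:ℝ) * (S / (1+S)) = 4 * S / (1+S) by ring, le_div_iff₀ h1S]
      linarith
  have hM4 : min (b * (1+L)^t) 1 ≤ 4 * (1 - αbar (t-1)) := by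
    calc min (b * (1+L)^t) 1 ≤ 4 * (S / (1+S)) := hMS
      _ ≤ 4 * (1 - αbar (t-1)) := by linarith
  -- facts about α t, αbar t
  have hβt : β t = L * min (b * (1+L)^t) 1 := hβ t ht2
  have hβtpos : 0 < β t := (hβbd t (by omega)).1
  have hβtle : β t ≤ L := by
    rw [hβt]
    calc L * min (b * (1+L)^t) 1 ≤ L * 1 := mul_le_mul_of_nonneg_left (min_le_right _ _) hL.le
      _ = L := mul_one L
  have hαt : α t = 1 - β t := hα t
  have hαt2 : 1/2 ≤ α t := by rw [hαt]; linarith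
  have hprod : αbar t = αbar (t-1) * α t := by
    calc αbar t = ∏ i ∈ Finset.Icc 1 (t-1+1), α i := by rw [hαbar, ht']
      _ = (∏ i ∈ Finset.Icc 1 (t-1), α i) * α (t-1+1) :=
          Finset.prod_Icc_succ_top (by omega) α
      _ = αbar (t-1) * α t := by rw [hαbar, ht']
  have hdiff : α t - αbar t = α t * (1 - αbar (t-1)) := by rw [hprod]; ring
  have hαtpos : 0 < α t := by linarith
  have hdpos : 0 < α t - αbar t := by rw [hdiff]; positivity
  have h1αbar : 0 < 1 - αbar t := by
    have : 1 - α t = β t := by rw [hαt]; ring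
    nlinarith
  refine ⟨?_, ?_, ?_⟩
  · rw [div_le_div_iff₀ h1αbar hdpos]
    have h1 : 0 ≤ 1 - α t := by rw [hαt]; linarith
    nlinarith
  · rw [div_le_div_iff₀ hdpos hα', hdiff]
    have h1 : 0 ≤ 1 - α t := by rw [hαt]; linarith
    nlinarith [mul_nonneg (mul_nonneg h1 hα'.le) (by linarith : (0:ℝ) ≤ α t - 1/2)]
  · have h4L : 4 * c₁ * Real.log T / T = 4 * L := by rw [hLdef]; ring
    rw [h4L, div_le_iff₀ hα', hαt]
    have : 1 - (1 - β t) = β t := by ring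
    rw [this, hβt]
    nlinarith [mul_le_mul_of_nonneg_left hM4 hL.le]
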